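/- Let N ≥ 1 and ζ = exp(2πi/N). Let x : ZMod N → ℂ, define y_j = |x_j|² and z_k = |x̂[k]|², and assume ŷ[k] ≠ 0 and ẑ[k] ≠ 0 for all k ∈ ZMod N. Assume furthermore that x has the phase-retrieval property: for every u : ZMod N → ℂ with |u_j| = |x_j| for all j and |û[k]| = |x̂[k]| for all k, there exists λ ∈ ℂ with |λ| = 1 and u = λ·x. If x' : ZMod N → ℂ satisfies B^M(x') = B^M(x) and B^{FM}(x') = B^{FM}(x) (as functions of (i,j)), then there exist λ ∈ ℂ with |λ| = 1 and k₀, n₀ ∈ ZMod N such that x'_j = λ·ζ^{n₀ j}·x_{j+k₀} for all j. That is, the Heisenberg bispectrum determines the Heisenberg orbit up to a global phase. -/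

import Mathlib

open ZMod

/-- `ζ = exp(2πi/N)`, the standard primitive `N`-th root of unity. -/
noncomputable def heisZeta (N : ℕ) : ℂ :=
  Complex.exp (2 * (Real.pi : ℂ) * Complex.I / (N : ℂ))

lemma heis_stdAddChar_eq (N : ℕ) [NeZero N] (a : ZMod N) :
    stdAddChar a = heisZeta N ^ a.val := by
  have h1 : ((a.val : ℤ) : ZMod N) = a := by
    push_cast
    simp [ZMod.natCast_val, ZMod.cast_id]
  conv_lhs => rw [← h1]
  rw [ZMod.stdAddChar_coe, heisZeta, ← Complex.exp_nat_mul]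
  push_cast
  ring_nf

lemma heis_dft_shift {N : ℕ} [NeZero N] (f : ZMod N → ℂ) (k₀ k : ZMod N) :
    dft (fun t => f (t + k₀)) k = stdAddChar (k₀ * k) * dft f k := by
  rw [dft_apply, dft_apply, Finset.mul_sum]
  refine Fintype.sum_equiv (Equiv.addRight k₀) _ _ fun j => ?_
  simp only [Equiv.coe_addRight, smul_eq_mul, ← mul_assoc, ← AddChar.map_add_eq_mul]
  congr 2
  ring

lemma heis_dft_mod {N : ℕ} [NeZero N] (f : ZMod N → ℂ) (a k : ZMod N) :
    dft (fun t => stdAddChar (a * t) * f t) k = dft f (k - a) := by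
  rw [dft_apply, dft_apply]
  refine Finset.sum_congr rfl fun j _ => ?_
  simp only [smul_eq_mul, ← mul_assoc, ← AddChar.map_add_eq_mul]
  congr 2
  ring

lemma heis_shift_of_bispectrum {N : ℕ} [NeZero N] (g g' : ZMod N → ℂ)
    (hgr : ∀ j, ∃ r : ℝ, 0 ≤ r ∧ g j = r) (hgr' : ∀ j, ∃ r : ℝ, 0 ≤ r ∧ g' j = r)
    (hg0 : ∀ k, dft g k ≠ 0)
    (hB : ∀ i j, dft g' i * dft g' j * dft g' (-i - j) = dft g i * dft g j * dft g (-i - j)) :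
    ∃ k₀ : ZMod N, ∀ j, g' j = g (j + k₀) := by
  have hg'0 : ∀ k, dft g' k ≠ 0 := by
    intro k hk
    have hR := mul_ne_zero (mul_ne_zero (hg0 k) (hg0 (-k))) (hg0 (-k - -k))
    rw [← hB] at hR
    exact hR (by rw [hk, zero_mul, zero_mul])
  set r : ZMod N → ℂ := fun k => dft g' k / dft g k with hr
  have hrne : ∀ k, r k ≠ 0 := fun k => div_ne_zero (hg'0 k) (hg0 k)
  have hr3 : ∀ i j, r i * r j * r (-i - j) = 1 := by
    intro i j
    simp only [hr]
    rw [div_mul_div_comm, div_mul_div_comm, hB]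
    exact div_self (mul_ne_zero (mul_ne_zero (hg0 i) (hg0 j)) (hg0 (-i - j)))
  -- r 0 = 1
  choose ρ hρ0 hρ using hgr
  choose ρ' hρ'0 hρ' using hgr'
  have hd : dft g 0 = ((∑ j, ρ j : ℝ) : ℂ) := by
    rw [dft_apply_zero]; push_cast; exact Finset.sum_congr rfl fun j _ => hρ j
  have hc : dft g' 0 = ((∑ j, ρ' j : ℝ) : ℂ) := by
    rw [dft_apply_zero]; push_cast; exact Finset.sum_congr rfl fun j _ => hρ' j
  have hr0 : r 0 = 1 := by
    have h3 : r 0 ^ 3 = 1 := by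
      have := hr3 0 0
      simp only [neg_zero, sub_zero] at this
      rw [pow_succ, pow_succ, pow_one]; exact this
    set t : ℝ := (∑ j, ρ' j) / (∑ j, ρ j) with ht
    have hrt : r 0 = (t : ℂ) := by rw [hr]; simp only [hc, hd, ht]; push_cast; ring
    have ht3 : t ^ 3 = 1 := by
      have := h3; rw [hrt] at this
      exact_mod_cast this
    have htnn : 0 ≤ t := div_nonneg (Finset.sum_nonneg fun j _ => hρ'0 j)
      (Finset.sum_nonneg fun j _ => hρ0 j)
    have hkey : (t - 1) * (t ^ 2 + t + 1) = 0 := by linear_combination ht3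
    have hpos : 0 < t ^ 2 + t + 1 := by positivity
    have : t = 1 := by
      rcases mul_eq_zero.1 hkey with h | h
      · linarith
      · linarith
    rw [hrt, this]; norm_num
  have hadd : ∀ i j, r (i + j) = r i * r j := by
    intro i j
    have h1 := hr3 i j
    have h2 := hr3 (i + j) 0
    simp only [neg_zero, sub_zero, hr0, mul_one] at h2
    have hij : -(i + j) = -i - j := by ring
    rw [hij] at h2
    calc r (i + j) = r (i + j) * (r i * r j * r (-i - j)) := by rw [h1, mul_one]
      _ = (r i * r j) * (r (i + j) * r (-i - j)) := by ring
      _ = r i * r j := by rw [h2, mul_one]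
  have hn : ∀ n : ℕ, r ((n : ZMod N)) = r 1 ^ n := by
    intro n
    induction n with
    | zero => simpa using hr0
    | succ n ih => push_cast; rw [hadd, ih, pow_succ]
  have hN : r 1 ^ N = 1 := by
    have := hn N
    rw [ZMod.natCast_self, hr0] at this
    exact this.symm
  obtain ⟨i, hiN, hi⟩ := (Complex.isPrimitiveRoot_exp N (NeZero.ne N)).eq_pow_of_pow_eq_one hN
  refine ⟨(i : ZMod N), ?_⟩
  have hζN : heisZeta N ^ N = 1 :=
    (Complex.isPrimitiveRoot_exp N (NeZero.ne N)).pow_eq_one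
  have key : ∀ k, dft g' k = stdAddChar ((i : ZMod N) * k) * dft g k := by
    intro k
    have hrk : r k = heisZeta N ^ (i * k.val) := by
      have h1 : ((k.val : ℕ) : ZMod N) = k := by simp [ZMod.natCast_val, ZMod.cast_id]
      have h1' := hn k.val
      rw [h1] at h1'
      rw [h1', ← hi, ← pow_mul, heisZeta]
    have h2 : ((i : ZMod N) * k) = ((i * k.val : ℕ) : ZMod N) := by
      push_cast
      rw [ZMod.natCast_val, ZMod.cast_id]
    have h3 : stdAddChar ((i : ZMod N) * k) = heisZeta N ^ (i * k.val) := by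
      rw [heis_stdAddChar_eq, h2, ZMod.val_natCast, ← pow_eq_pow_mod _ hζN]
    rw [h3, ← hrk]
    exact (div_mul_cancel₀ _ (hg0 k)).symm
  have hdfteq : dft g' = dft (fun t => g (t + (i : ZMod N))) := by
    funext k
    rw [heis_dft_shift, key]
  have := dft.injective hdfteq
  exact fun j => congrFun this j

/-- The modulus bispectrum `B^M(x)(i,j) = ŷ[i]·ŷ[j]·ŷ[-i-j]` where `y_t = |x_t|²`. -/
noncomputable def modulusBispectrum {N : ℕ} [NeZero N] (x : ZMod N → ℂ) (i j : ZMod N) : ℂ :=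
  dft (fun t => ((‖x t‖ : ℂ)) ^ 2) i *
    dft (fun t => ((‖x t‖ : ℂ)) ^ 2) j *
    dft (fun t => ((‖x t‖ : ℂ)) ^ 2) (-i - j)

/-- The Fourier-modulus bispectrum `B^{FM}(x)(i,j) = ẑ[i]·ẑ[j]·ẑ[-i-j]` where
`z_t = |x̂[t]|²`. -/
noncomputable def fourierModulusBispectrum {N : ℕ} [NeZero N] (x : ZMod N → ℂ)
    (i j : ZMod N) : ℂ :=
  dft (fun t => ((‖dft x t‖ : ℂ)) ^ 2) i *
    dft (fun t => ((‖dft x t‖ : ℂ)) ^ 2) j *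
    dft (fun t => ((‖dft x t‖ : ℂ)) ^ 2) (-i - j)

/-- **The Heisenberg bispectrum determines the Heisenberg orbit up to a global phase.**
Suppose `x` has nonvanishing `ŷ` and `ẑ` and satisfies the phase-retrieval property:
any vector with the same magnitudes and Fourier magnitudes as `x` is a unimodular
multiple of `x`. If `x'` has the same Heisenberg bispectrum as `x`, then
`x'_j = λ·ζ^{n₀j}·x_{j+k₀}` for some `|λ| = 1` and `k₀, n₀ ∈ ℤ_N`. -/
theorem heisenberg_bispectrum_separates_up_to_phase
    {N : ℕ} [NeZero N] (x : ZMod N → ℂ)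
    (hy : ∀ k : ZMod N, dft (fun t => ((‖x t‖ : ℂ)) ^ 2) k ≠ 0)
    (hz : ∀ k : ZMod N, dft (fun t => ((‖dft x t‖ : ℂ)) ^ 2) k ≠ 0)
    (hPR : ∀ u : ZMod N → ℂ,
      (∀ j : ZMod N, ‖u j‖ = ‖x j‖) →
      (∀ k : ZMod N, ‖dft u k‖ = ‖dft x k‖) →
      ∃ lam : ℂ, ‖lam‖ = 1 ∧ u = fun j => lam * x j)
    (x' : ZMod N → ℂ)
    (hBM : ∀ i j : ZMod N, modulusBispectrum x' i j = modulusBispectrum x i j)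
    (hBFM : ∀ i j : ZMod N, fourierModulusBispectrum x' i j = fourierModulusBispectrum x i j) :
    ∃ (lam : ℂ) (k₀ n₀ : ZMod N), ‖lam‖ = 1 ∧
      ∀ j : ZMod N, x' j = lam * heisZeta N ^ (n₀ * j).val * x (j + k₀) := by
  -- Step 1: shift for the magnitudes
  obtain ⟨k₀, hk₀⟩ := heis_shift_of_bispectrum
    (fun t => ((‖x t‖ : ℂ)) ^ 2) (fun t => ((‖x' t‖ : ℂ)) ^ 2)
    (fun j => ⟨(‖x j‖) ^ 2, by positivity, by push_cast; ring⟩)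
    (fun j => ⟨(‖x' j‖) ^ 2, by positivity, by push_cast; ring⟩)
    hy (fun i j => hBM i j)
  -- Step 2: shift for the Fourier magnitudes
  obtain ⟨m₀, hm₀⟩ := heis_shift_of_bispectrum
    (fun t => ((‖dft x t‖ : ℂ)) ^ 2) (fun t => ((‖dft x' t‖ : ℂ)) ^ 2)
    (fun j => ⟨(‖dft x j‖) ^ 2, by positivity, by push_cast; ring⟩)
    (fun j => ⟨(‖dft x' j‖) ^ 2, by positivity, by push_cast; ring⟩)
    hz (fun i j => hBFM i j)
  have habs : ∀ j, ‖x' j‖ = ‖x (j + k₀)‖ := by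
    intro j
    have h := hk₀ j
    have h2 : (‖x' j‖) ^ 2 = (‖x (j + k₀)‖) ^ 2 := by exact_mod_cast h
    exact (pow_left_inj₀ (norm_nonneg _) (norm_nonneg _)
      two_ne_zero).1 h2
  have habsF : ∀ k, ‖dft x' k‖ = ‖dft x (k + m₀)‖ := by
    intro k
    have h := hm₀ k
    have h2 : (‖dft x' k‖) ^ 2 = (‖dft x (k + m₀)‖) ^ 2 := by
      exact_mod_cast h
    exact (pow_left_inj₀ (norm_nonneg _) (norm_nonneg _)
      two_ne_zero).1 h2
  have habschar : ∀ a : ZMod N, ‖stdAddChar a‖ = 1 := by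
    intro a
    rw [ZMod.stdAddChar_apply]
    exact Circle.norm_coe _
  -- the candidate vector
  set u : ZMod N → ℂ := fun j => stdAddChar (m₀ * j) * x' (j - k₀) with hu_def
  have hu1 : ∀ j, ‖u j‖ = ‖x j‖ := by
    intro j
    rw [hu_def]
    simp only [norm_mul, habschar, one_mul]
    rw [habs (j - k₀), sub_add_cancel]
  have hsub : (fun t => x' (t - k₀)) = (fun t => x' (t + -k₀)) := by
    funext t; rw [sub_eq_add_neg]
  have hu2 : ∀ k, ‖dft u k‖ = ‖dft x k‖ := by
    intro k
    have h1 : dft u k = dft (fun t => x' (t - k₀)) (k - m₀) :=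
      heis_dft_mod (fun t => x' (t - k₀)) m₀ k
    have h2 : dft (fun t => x' (t - k₀)) (k - m₀)
        = stdAddChar (-k₀ * (k - m₀)) * dft x' (k - m₀) := by
      rw [hsub]
      exact heis_dft_shift x' (-k₀) (k - m₀)
    rw [h1, h2, norm_mul, habschar, one_mul, habsF (k - m₀), sub_add_cancel]
  obtain ⟨lam, hlam, hueq⟩ := hPR u hu1 hu2
  refine ⟨lam * stdAddChar (-(m₀ * k₀)), k₀, -m₀, ?_, ?_⟩
  · rw [norm_mul, hlam, habschar, one_mul]
  · intro j
    have heq := congrFun hueq (j + k₀)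
    rw [hu_def] at heq
    simp only [add_sub_cancel_right] at heq
    have e1 : stdAddChar (-(m₀ * k₀)) * stdAddChar (-m₀ * j) * stdAddChar (m₀ * (j + k₀)) = 1 := by
      rw [← AddChar.map_add_eq_mul, ← AddChar.map_add_eq_mul]
      have : -(m₀ * k₀) + -m₀ * j + m₀ * (j + k₀) = 0 := by ring
      rw [this, AddChar.map_zero_eq_one]
    rw [← heis_stdAddChar_eq]
    linear_combination stdAddChar (-(m₀ * k₀)) * stdAddChar (-m₀ * j) * heq - x' j * e1
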